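/- Let y, z be non-orthogonal rays in a complex Hilbert space and r ∈ [0,1]. Define the superposition ry + (1−r)z as the ray spanned by √r·v + √(1−r)·w, where v ∈ y, w ∈ z are unit vectors with ⟨v,w⟩ > 0. Then √r·v + √(1−r)·w ≠ 0, the superposition is well-defined (independent of the choice of v), 1·y + 0·z = y, and ry + (1−r)z = (1−r)z + ry. -/

import Mathlib

local notation "⟪" x ", " y "⟫" => @inner ℂ _ _ x y

theorem superposition_well_defined {H : Type*} [NormedAddCommGroup H]
    [InnerProductSpace ℂ H]
    (y z : Submodule ℂ H) (v w : H)
    (hv : ‖v‖ = 1) (hw : ‖w‖ = 1)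
    (hy : y = Submodule.span ℂ {v}) (hz : z = Submodule.span ℂ {w})
    (him : (⟪v, w⟫).im = 0) (hre : 0 < (⟪v, w⟫).re)
    (r : ℝ) (hr0 : 0 ≤ r) (hr1 : r ≤ 1) :
    ((Real.sqrt r : ℂ) • v + (Real.sqrt (1 - r) : ℂ) • w ≠ 0) ∧
    (∀ v' w' : H, ‖v'‖ = 1 → ‖w'‖ = 1 →
      y = Submodule.span ℂ {v'} → z = Submodule.span ℂ {w'} →
      (⟪v', w'⟫).im = 0 → 0 < (⟪v', w'⟫).re →
      Submodule.span ℂ {(Real.sqrt r : ℂ) • v + (Real.sqrt (1 - r) : ℂ) • w} =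
        Submodule.span ℂ {(Real.sqrt r : ℂ) • v' + (Real.sqrt (1 - r) : ℂ) • w'}) ∧
    (Submodule.span ℂ
        {(Real.sqrt 1 : ℂ) • v + (Real.sqrt (1 - 1) : ℂ) • w} = y) ∧
    (Submodule.span ℂ {(Real.sqrt r : ℂ) • v + (Real.sqrt (1 - r) : ℂ) • w} =
      Submodule.span ℂ
        {(Real.sqrt (1 - r) : ℂ) • w + (Real.sqrt (1 - (1 - r)) : ℂ) • v}) := by
  have ha : (0:ℝ) ≤ Real.sqrt r := Real.sqrt_nonneg _
  have hb : (0:ℝ) ≤ Real.sqrt (1 - r) := Real.sqrt_nonneg _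
  have ha2 : Real.sqrt r ^ 2 = r := Real.sq_sqrt hr0
  have hb2 : Real.sqrt (1 - r) ^ 2 = 1 - r := Real.sq_sqrt (by linarith)
  refine ⟨?_, ?_, ?_, ?_⟩
  · -- nonzero
    have hn : ‖(Real.sqrt r : ℂ) • v + (Real.sqrt (1 - r) : ℂ) • w‖ ^ 2
        = 1 + 2 * (Real.sqrt r * Real.sqrt (1 - r)) * (⟪v, w⟫).re := by
      rw [norm_add_sq (𝕜 := ℂ)]
      simp only [inner_smul_left, inner_smul_right, norm_smul, Complex.norm_real,
        Complex.conj_ofReal, hv, hw, mul_one, Real.norm_eq_abs,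
        abs_of_nonneg ha, abs_of_nonneg hb, mul_pow]
      rw [ha2, hb2]
      simp [Complex.mul_re, Complex.ofReal_mul]
      ring
    intro h0
    rw [h0] at hn
    simp at hn
    nlinarith [mul_nonneg ha hb]
  · intro v' w' hv' hw' hy' hz' him' hre'
    obtain ⟨c, hc⟩ := Submodule.mem_span_singleton.mp
      (by rw [← hy, hy']; exact Submodule.mem_span_singleton_self v')
    obtain ⟨d, hd⟩ := Submodule.mem_span_singleton.mp
      (by rw [← hz, hz']; exact Submodule.mem_span_singleton_self w')
    have hnc : ‖c‖ = 1 := by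
      have := hv'
      rw [← hc, norm_smul, hv, mul_one] at this
      exact this
    have hnd : ‖d‖ = 1 := by
      have := hw'
      rw [← hd, norm_smul, hw, mul_one] at this
      exact this
    set u : ℂ := starRingEnd ℂ c * d with hu
    have hin : ⟪v', w'⟫ = u * ⟪v, w⟫ := by
      rw [← hc, ← hd, inner_smul_left, inner_smul_right]; ring
    have hnu : ‖u‖ = 1 := by
      simp [hu, norm_mul, hnc, hnd]
    have huim : u.im = 0 := by
      have := him'
      rw [hin] at this
      simp [Complex.mul_im, him] at this
      rcases this with h | h
      · exact h
      · exact absurd h (ne_of_gt hre)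
    have hure : 0 < u.re := by
      have := hre'
      rw [hin] at this
      simp [Complex.mul_re, him] at this
      nlinarith
    have hu1 : u = 1 := by
      have : u = (u.re : ℂ) := Complex.ext rfl (by simp [huim])
      rw [this] at hnu ⊢
      rw [Complex.norm_real, Real.norm_eq_abs, abs_of_pos hure] at hnu
      rw [hnu]; norm_num
    have hdc : d = c := by
      have hcc : starRingEnd ℂ c * c = 1 := by
        rw [mul_comm, Complex.mul_conj]
        norm_cast
        simp [Complex.normSq_eq_norm_sq, hnc]
      have : c * u = d := by
        rw [hu]
        calc c * (starRingEnd ℂ c * d) = (c * starRingEnd ℂ c) * d := by ring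
        _ = d := by rw [mul_comm c, hcc, one_mul]
      rw [hu1, mul_one] at this
      exact this.symm
    rw [← hc, ← hd, hdc]
    have : (Real.sqrt r : ℂ) • c • v + (Real.sqrt (1 - r) : ℂ) • c • w
        = c • ((Real.sqrt r : ℂ) • v + (Real.sqrt (1 - r) : ℂ) • w) := by
      module
    have hc0 : c ≠ 0 := fun h => by simp [h] at hnc
    rw [this, Submodule.span_singleton_smul_eq (isUnit_iff_ne_zero.mpr hc0) _]
  · simp [hy]
  · rw [sub_sub_cancel, add_comm]
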